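/- Let E = EuclideanSpace ℝ (Fin d) for a positive natural number d. If J : E → ℝ is differentiable with L̂-Lipschitz gradient (L̂ ≥ 0) and λ > L̂, then for every w ∈ E there exists a unique θ̂(w) ∈ E that globally maximizes θ ↦ J(θ) − (λ/2)‖θ − w‖²; i.e., there is exactly one θ̂(w) with J(θ̂(w)) − (λ/2)‖θ̂(w) − w‖² ≥ J(θ) − (λ/2)‖θ − w‖² for all θ ∈ E. -/

import Mathlib

open InnerProductSpace Set

local notation "⟪" x ", " y "⟫" => @inner ℝ _ _ x y

lemma moreau_hasGradientAt {E : Type*} [NormedAddCommGroup E] [InnerProductSpace ℝ E]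
    [CompleteSpace E]
    (J : E → ℝ) (lam : ℝ) (hJ : Differentiable ℝ J) (w x : E) :
    HasGradientAt (fun θ => J θ - lam / 2 * ‖θ - w‖ ^ 2)
      (gradient J x - lam • (x - w)) x := by
  rw [hasGradientAt_iff_hasFDerivAt]
  have hJx : HasFDerivAt J (toDual ℝ E (gradient J x)) x :=
    (hJ x).hasGradientAt.hasFDerivAt
  have hi : HasFDerivAt (fun θ : E => θ - w) (ContinuousLinearMap.id ℝ E) x :=
    (hasFDerivAt_id x).sub_const w
  have hin := (hi.inner ℝ hi).const_mul (lam / 2)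
  have heq : (fun θ : E => lam / 2 * ⟪θ - w, θ - w⟫) =
      fun θ : E => lam / 2 * ‖θ - w‖ ^ 2 := by
    funext θ; rw [real_inner_self_eq_norm_sq]
  rw [heq] at hin
  have := hJx.sub hin
  refine HasFDerivAt.congr_fderiv this ?_
  ext v
  simp [fderivInnerCLM_apply, toDual_apply_apply, inner_sub_left, real_inner_smul_left]
  rw [real_inner_comm (x - w) v, inner_sub_left (𝕜 := ℝ)]
  ring

/-- Existence and uniqueness of the global maximizer of the inner
Moreau-envelope objective `θ ↦ J(θ) − (λ/2)‖θ − w‖²` when `∇J` is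
`L̂`-Lipschitz and `λ > L̂`. -/
theorem moreau_inner_exists_unique_maximizer
    (d : ℕ) (hd : 0 < d)
    (J : EuclideanSpace ℝ (Fin d) → ℝ) (Lhat lam : ℝ)
    (hLhat : 0 ≤ Lhat) (hJ : Differentiable ℝ J)
    (hLip : ∀ x y, ‖gradient J x - gradient J y‖ ≤ Lhat * ‖x - y‖)
    (hlam : Lhat < lam)
    (w : EuclideanSpace ℝ (Fin d)) :
    ∃! θhat : EuclideanSpace ℝ (Fin d),
      ∀ θ : EuclideanSpace ℝ (Fin d),
        J θ - lam / 2 * ‖θ - w‖ ^ 2 ≤ J θhat - lam / 2 * ‖θhat - w‖ ^ 2 := by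
  have hlam0 : (0:ℝ) < lam := lt_of_le_of_lt hLhat hlam
  set T : EuclideanSpace ℝ (Fin d) → EuclideanSpace ℝ (Fin d) :=
    fun θ => w + lam⁻¹ • gradient J θ with hT
  have hTlip : LipschitzWith ⟨Lhat / lam, by positivity⟩ T := by
    apply LipschitzWith.of_dist_le_mul
    intro a b
    have hsub : T a - T b = lam⁻¹ • (gradient J a - gradient J b) := by
      simp only [hT, smul_sub]; abel
    rw [dist_eq_norm, dist_eq_norm, hsub, norm_smul, norm_inv, Real.norm_eq_abs,
      abs_of_pos hlam0]
    have h := hLip a b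
    have : lam⁻¹ * ‖gradient J a - gradient J b‖ ≤ lam⁻¹ * (Lhat * ‖a - b‖) := by
      apply mul_le_mul_of_nonneg_left h (by positivity)
    calc lam⁻¹ * ‖gradient J a - gradient J b‖ ≤ lam⁻¹ * (Lhat * ‖a - b‖) := this
      _ = (Lhat / lam) * ‖a - b‖ := by field_simp
  have hcontr : ContractingWith ⟨Lhat / lam, by positivity⟩ T := by
    constructor
    · exact_mod_cast (div_lt_one hlam0).mpr hlam
    · exact hTlip
  set θhat : EuclideanSpace ℝ (Fin d) := hcontr.fixedPoint T with hθhat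
  have hfix : T θhat = θhat := hcontr.fixedPoint_isFixedPt
  have hfix' : w + lam⁻¹ • gradient J θhat = θhat := hfix
  have hgrad : gradient J θhat = lam • (θhat - w) := by
    have h1 : θhat - w = lam⁻¹ • gradient J θhat := by
      conv_lhs => rw [← hfix']
      abel
    have h2 := congrArg (fun v => lam • v) h1
    simp only [smul_smul, mul_inv_cancel₀ hlam0.ne', one_smul] at h2
    exact h2.symm
  have hcrit_fix : ∀ x, gradient J x = lam • (x - w) → T x = x := by
    intro x hx
    simp only [hT, hx, smul_smul, inv_mul_cancel₀ hlam0.ne', one_smul]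
    abel
  have hmax : ∀ θ, J θ - lam / 2 * ‖θ - w‖ ^ 2 ≤ J θhat - lam / 2 * ‖θhat - w‖ ^ 2 := by
    intro θ
    set u := θ - θhat with hu
    set φ : ℝ → ℝ := fun t => J (θhat + t • u) - lam / 2 * ‖θhat + t • u - w‖ ^ 2 with hφ
    have hline : ∀ t : ℝ, HasDerivAt (fun s : ℝ => θhat + s • u) u t := by
      intro t
      simpa using ((hasDerivAt_id t).smul_const u).const_add θhat
    have hderiv : ∀ t : ℝ, HasDerivAt φ
        ⟪gradient J (θhat + t • u) - lam • (θhat + t • u - w), u⟫ t := by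
      intro t
      have h1 := (moreau_hasGradientAt J lam hJ w (θhat + t • u)).hasFDerivAt
      have h2 := h1.comp_hasDerivAt t (hline t)
      simpa only [Function.comp_def, toDual_apply_apply] using h2
    have hD0 : ∀ t ∈ Icc (0:ℝ) 1,
        ⟪gradient J (θhat + t • u) - lam • (θhat + t • u - w), u⟫ ≤ 0 := by
      intro t ht
      have ht0 : 0 ≤ t := ht.1
      set xt := θhat + t • u with hxt
      have hsub : xt - θhat = t • u := by simp [hxt]
      have hxw : xt - w = (θhat - w) + t • u := by simp only [hxt]; abel
      have hip : ⟪gradient J xt - lam • (xt - w), u⟫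
          = ⟪gradient J xt - gradient J θhat, u⟫
            + (⟪gradient J θhat, u⟫ - lam * ⟪θhat - w, u⟫)
            - lam * t * ‖u‖ ^ 2 := by
        rw [hxw, inner_sub_left (𝕜 := ℝ), inner_sub_left (𝕜 := ℝ),
          real_inner_smul_left, inner_add_left (𝕜 := ℝ), real_inner_smul_left,
          real_inner_self_eq_norm_sq]
        ring
      have hgzero : ⟪gradient J θhat, u⟫ - lam * ⟪θhat - w, u⟫ = 0 := by
        rw [hgrad, real_inner_smul_left]; ring
      have hbound : ⟪gradient J xt - gradient J θhat, u⟫ ≤ Lhat * t * ‖u‖ ^ 2 := by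
        calc ⟪gradient J xt - gradient J θhat, u⟫
            ≤ ‖gradient J xt - gradient J θhat‖ * ‖u‖ := real_inner_le_norm _ _
          _ ≤ (Lhat * ‖xt - θhat‖) * ‖u‖ :=
              mul_le_mul_of_nonneg_right (hLip xt θhat) (norm_nonneg u)
          _ = Lhat * t * ‖u‖ ^ 2 := by
              rw [hsub, norm_smul, Real.norm_eq_abs, abs_of_nonneg ht0]; ring
      rw [hip, hgzero, add_zero]
      have hn : (0:ℝ) ≤ t * ‖u‖ ^ 2 := by positivity
      nlinarith
    have hant : AntitoneOn φ (Icc (0:ℝ) 1) := by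
      apply antitoneOn_of_deriv_nonpos (convex_Icc 0 1)
      · exact (Differentiable.continuous fun t => (hderiv t).differentiableAt).continuousOn
      · exact fun t _ => ((hderiv t).differentiableAt).differentiableWithinAt
      · intro t ht
        rw [interior_Icc] at ht
        rw [(hderiv t).deriv]
        exact hD0 t ⟨le_of_lt ht.1, le_of_lt ht.2⟩
    have h01 := hant (left_mem_Icc.mpr zero_le_one) (right_mem_Icc.mpr zero_le_one)
      zero_le_one
    have e1 : θhat + (1:ℝ) • u = θ := by simp [hu]
    have e0 : θhat + (0:ℝ) • u = θhat := by simp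
    simpa only [hφ, e1, e0] using h01
  refine ⟨θhat, hmax, ?_⟩
  intro y hy
  have hloc : IsLocalMax (fun θ => J θ - lam / 2 * ‖θ - w‖ ^ 2) y :=
    Filter.Eventually.of_forall hy
  have hfd := (moreau_hasGradientAt J lam hJ w y).hasFDerivAt
  have h0 : toDual ℝ (EuclideanSpace ℝ (Fin d)) (gradient J y - lam • (y - w)) = 0 := by
    rw [← hfd.fderiv]; exact hloc.fderiv_eq_zero
  have hgy : gradient J y = lam • (y - w) := by
    have h1 : toDual ℝ (EuclideanSpace ℝ (Fin d)) (gradient J y - lam • (y - w))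
        = toDual ℝ (EuclideanSpace ℝ (Fin d)) 0 := by rw [h0, map_zero]
    exact sub_eq_zero.mp ((toDual ℝ (EuclideanSpace ℝ (Fin d))).injective h1)
  exact hcontr.fixedPoint_unique' (hcrit_fix y hgy) hfix
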